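/- Let L be an integral ℓ-monoid, let α be a fuzzy regular expression over a finite alphabet X, and let Y be the alphabet associated with α. Then for every u ∈ X*, the set {φ*_α(v)⊗‖α_R‖(v) : v ∈ U_Y(u)} has a least upper bound in L, and ‖α‖(u) = ⋁_{v∈U_Y(u)} φ*_α(v)⊗‖α_R‖(v). -/

import Mathlib

attribute [local instance] Classical.propDecidable

/-- A lattice-ordered monoid (ℓ-monoid): a lattice with least element `⊥` and greatest
element `⊤`, together with a monoid structure (multiplication `*`, unit `1`, playing the
role of `e`) such that `⊥` (playing the role of the scalar `0`) is absorbing and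
multiplication distributes over binary joins on both sides. -/
class LMonoid (L : Type*) extends Lattice L, BoundedOrder L, Monoid L where
  mul_bot : ∀ x : L, x * ⊥ = ⊥
  bot_mul : ∀ x : L, ⊥ * x = ⊥
  mul_sup : ∀ x y z : L, x * (y ⊔ z) = x * y ⊔ x * z
  sup_mul : ∀ x y z : L, (x ⊔ y) * z = x * z ⊔ y * z

/-- An integral ℓ-monoid: the unit of the multiplication is the top element of the lattice. -/
class IntegralLMonoid (L : Type*) extends LMonoid L where
  one_eq_top : (1 : L) = ⊤

/-- Fuzzy regular expressions over an alphabet `X` with scalars in `L`. -/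
inductive FRE (X L : Type*) where
  | zero : FRE X L
  | eps : FRE X L
  | char : X → FRE X L
  | smul : L → FRE X L → FRE X L
  | plus : FRE X L → FRE X L → FRE X L
  | comp : FRE X L → FRE X L → FRE X L
  | star : FRE X L → FRE X L

/-- The set of scalars of `L` occurring in a fuzzy regular expression. -/
def FRE.scalars {X L : Type*} : FRE X L → Set L
  | .zero => ∅
  | .eps => ∅
  | .char _ => ∅
  | .smul lam β => insert lam β.scalars
  | .plus β γ => β.scalars ∪ γ.scalars
  | .comp β γ => β.scalars ∪ γ.scalars
  | .star β => β.scalars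

noncomputable section

namespace Fz

variable {L : Type*} [IntegralLMonoid L]

/-- Composition of fuzzy relations: `(R ∘ S)(a,b) = ⋁_{c} R(a,c) ⊗ S(c,b)`. -/
def fcomp {A : Type*} [Fintype A] (R S : A → A → L) : A → A → L :=
  fun a b => Finset.univ.sup fun c => R a c * S c b

/-- Composition of a fuzzy relation with a fuzzy set: `(R ∘ f)(a) = ⋁_{b} R(a,b) ⊗ f(b)`. -/
def fcompf {A : Type*} [Fintype A] (R : A → A → L) (f : A → L) : A → L :=
  fun a => Finset.univ.sup fun b => R a b * f b

/-- Composition of a fuzzy set with a fuzzy relation: `(f ∘ R)(a) = ⋁_{b} f(b) ⊗ R(b,a)`. -/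
def fcompfR {A : Type*} [Fintype A] (f : A → L) (R : A → A → L) : A → L :=
  fun a => Finset.univ.sup fun b => f b * R b a

/-- Powers of a fuzzy relation: `R⁰` is the crisp equality and `R^{k+1} = R^k ∘ R`. -/
def rpow {A : Type*} [Fintype A] (R : A → A → L) : ℕ → A → A → L
  | 0 => fun a b => if a = b then 1 else ⊥
  | k + 1 => fcomp (rpow R k) R

private def dstarAux {A Z : Type*} [Fintype A] (δ : A → Z → A → L) : A → List Z → A → L
  | a, [], b => if a = b then 1 else ⊥
  | a, z :: w, b => Finset.univ.sup fun c => dstarAux δ a w c * δ c z b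

/-- The extension of a fuzzy transition relation to words:
`δ(a, ε, b) = 1` if `a = b` and `⊥` otherwise, and
`δ(a, ux, b) = ⋁_{c} δ(a, u, c) ⊗ δ(c, x, b)`. -/
def dstar {A Z : Type*} [Fintype A] (δ : A → Z → A → L) (a : A) (w : List Z) (b : A) : L :=
  dstarAux δ a w.reverse b

/-- Fuzzy language recognized by a fuzzy automaton with a single crisp initial state `a0`:
`L(A)(u) = ⋁_{b} δ(a0, u, b) ⊗ τ(b)`. -/
def lang {A Z : Type*} [Fintype A] (δ : A → Z → A → L) (a0 : A) (τ : A → L)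
    (w : List Z) : L :=
  Finset.univ.sup fun b => dstar δ a0 w b * τ b

/-- Concatenation of fuzzy languages: `(fg)(u) = ⋁_{u = vw} f(v) ⊗ g(w)`
(a finite join over the factorizations of `u`). -/
def fconcat {X : Type*} (f g : List X → L) : List X → L :=
  fun u => (Finset.range (u.length + 1)).sup fun i => f (u.take i) * g (u.drop i)

/-- Powers of a fuzzy language: `f⁰` is the characteristic function of the empty word,
and `f^{n+1} = fⁿ f`. -/
def fpow {X : Type*} (f : List X → L) : ℕ → List X → L
  | 0 => fun u => if u = [] then 1 else ⊥
  | n + 1 => fconcat (fpow f n) f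

/-- `IsNorm α f` asserts that `f` is the fuzzy language `‖α‖` represented by the fuzzy
regular expression `α` (for the star, `‖β*‖(u)` is the least upper bound of the powers,
which is required to exist). -/
inductive IsNorm {X : Type*} : FRE X L → (List X → L) → Prop
  | zero : IsNorm .zero fun _ => ⊥
  | eps : IsNorm .eps fun u => if u = [] then 1 else ⊥
  | char (x : X) : IsNorm (.char x) fun u => if u = [x] then 1 else ⊥
  | smul (lam : L) {β : FRE X L} {f : List X → L} :
      IsNorm β f → IsNorm (.smul lam β) fun u => lam * f u
  | plus {β γ : FRE X L} {f g : List X → L} :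
      IsNorm β f → IsNorm γ g → IsNorm (.plus β γ) fun u => f u ⊔ g u
  | comp {β γ : FRE X L} {f g : List X → L} :
      IsNorm β f → IsNorm γ g → IsNorm (.comp β γ) (fconcat f g)
  | star {β : FRE X L} {f g : List X → L} :
      IsNorm β f → (∀ u, IsLUB {l | ∃ n : ℕ, l = fpow f n u} (g u)) →
      IsNorm (.star β) g

/-- The ordinary regular expression `α_R` over `X ∪ Y` obtained from a fuzzy regular
expression `α` by replacing each scalar `λ` by the associated letter `λ' = sc λ ∈ Y`. -/
def toReg {X Y : Type*} (sc : L → Y) : FRE X L → RegularExpression (X ⊕ Y)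
  | .zero => 0
  | .eps => 1
  | .char x => RegularExpression.char (Sum.inl x)
  | .smul lam β => RegularExpression.char (Sum.inr (sc lam)) * toReg sc β
  | .plus β γ => toReg sc β + toReg sc γ
  | .comp β γ => toReg sc β * toReg sc γ
  | .star β => (toReg sc β).star

/-- `U_Y(u)`: the set of words over `X ∪ Y` from which deleting all letters of `Y`
yields `u` (the shuffle of `u` with `Y*`). -/
def UY {X : Type*} (Y : Type*) (u : List X) : Set (List (X ⊕ Y)) :=
  {v | v.filterMap (fun z => z.getLeft?) = u}

/-- The homomorphism `φ*_α : (X ∪ Y)* → (L, ⊗, 1)` determined by mapping every letter of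
`X` to `1` and every letter `λ' ∈ Y` to the corresponding scalar `λ = φY λ'`. -/
def phiStar {X Y : Type*} (φY : Y → L) (v : List (X ⊕ Y)) : L :=
  (v.map (Sum.elim (fun _ => (1 : L)) φY)).prod

/-- The language `‖α_R‖` of the regular expression `α_R`, viewed as a fuzzy language
with membership values in `{0, 1} ⊆ L`. -/
def langR {X Y : Type*} (sc : L → Y) (α : FRE X L) (v : List (X ⊕ Y)) : L :=
  if v ∈ (toReg sc α).matches' then 1 else ⊥

/-- The reflexive fuzzy relation `R` on the state set of a nondeterministic automaton over
`X ∪ Y`: `R(a,a) = 1` and, for `a ≠ b`, `R(a,b) = ⋁_{λ' ∈ Y} λ ⊗ δ(a, λ', b)`. -/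
def Rstep {X Y A : Type*} [Fintype A] [Fintype Y] (φY : Y → L)
    (δ : A → X ⊕ Y → A → L) : A → A → L :=
  fun a b => if a = b then 1 else Finset.univ.sup fun y : Y => φY y * δ a (Sum.inr y) b

/-- The fuzzy relation `R_A = Rⁿ`, `n = |A|`: the least transitive fuzzy relation
containing `R`. -/
def RA {X Y A : Type*} [Fintype A] [Fintype Y] (φY : Y → L)
    (δ : A → X ⊕ Y → A → L) : A → A → L :=
  rpow (Rstep φY δ) (Fintype.card A)

/-- The set `{φ*_α(v) ⊗ δ^A(a,v,b) : v ∈ U_Y(x)}` whose least upper bound defines the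
transition `δ^{A_α}(a, x, b)` of the fuzzy automaton associated with `A` and `α`. -/
def dset {X Y A : Type*} [Fintype A] (φY : Y → L) (δ : A → X ⊕ Y → A → L)
    (a : A) (x : X) (b : A) : Set L :=
  {l | ∃ v ∈ UY Y [x], l = phiStar φY v * dstar δ a v b}

/-- The set `{⋁_{b} φ*_α(v) ⊗ δ^A(a,v,b) ⊗ τ(b) : v ∈ Y*}` whose least upper bound defines
the terminal degree `τ^{A_α}(a)` of the fuzzy automaton associated with `A` and `α`. -/
def tset {X Y A : Type*} [Fintype A] (φY : Y → L) (δ : A → X ⊕ Y → A → L)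
    (τ : A → L) (a : A) : Set L :=
  {l | ∃ w : List Y, l = Finset.univ.sup fun b =>
    phiStar φY ((w.map Sum.inr : List (X ⊕ Y))) *
      dstar δ a (w.map Sum.inr) b * τ b}

end Fz

end

section Aux

open Fz

variable {L : Type*} [IntegralLMonoid L]

private lemma ilm_le_one (a : L) : a ≤ 1 := by
  rw [IntegralLMonoid.one_eq_top]; exact le_top

private lemma ilm_mul_le_mul_left {a b : L} (c : L) (h : a ≤ b) : c * a ≤ c * b := by
  have hb : c * b = c * a ⊔ c * b := by
    rw [← LMonoid.mul_sup, sup_eq_right.mpr h]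
  rw [hb]; exact le_sup_left

private lemma ilm_mul_le_mul_right {a b : L} (c : L) (h : a ≤ b) : a * c ≤ b * c := by
  have hb : b * c = a * c ⊔ b * c := by
    rw [← LMonoid.sup_mul, sup_eq_right.mpr h]
  rw [hb]; exact le_sup_left

private lemma ilm_mul_le_mul {a b c d : L} (h1 : a ≤ b) (h2 : c ≤ d) : a * c ≤ b * d :=
  (ilm_mul_le_mul_left a h2).trans (ilm_mul_le_mul_right d h1)

private lemma ilm_mul_le_left (a b : L) : a * b ≤ a := by
  have := ilm_mul_le_mul_left a (ilm_le_one b)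
  rwa [mul_one] at this

private lemma ilm_mul_sup_finset {ι : Type*} (c : L) (s : Finset ι) (f : ι → L) :
    c * s.sup f = s.sup fun i => c * f i := by
  classical
  induction s using Finset.induction_on with
  | empty => simpa using LMonoid.mul_bot c
  | insert _ _ hnot ih => rw [Finset.sup_insert, Finset.sup_insert, LMonoid.mul_sup, ih]

private lemma ilm_sup_mul_finset {ι : Type*} (c : L) (s : Finset ι) (f : ι → L) :
    s.sup f * c = s.sup fun i => f i * c := by
  classical
  induction s using Finset.induction_on with
  | empty => simpa using LMonoid.bot_mul c
  | insert _ _ hnot ih => rw [Finset.sup_insert, Finset.sup_insert, LMonoid.sup_mul, ih]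

/-- Deleting the letters of `Y` from a word over `X ⊕ Y`. -/
private def delY {X Y : Type*} (v : List (X ⊕ Y)) : List X :=
  v.filterMap (fun z => z.getLeft?)

private lemma delY_nil {X Y : Type*} : delY ([] : List (X ⊕ Y)) = [] := rfl

private lemma delY_append {X Y : Type*} (v w : List (X ⊕ Y)) :
    delY (v ++ w) = delY v ++ delY w := by simp [delY]

private lemma phiStar_nil {X Y : Type*} (φY : Y → L) :
    phiStar (X := X) φY [] = 1 := rfl

private lemma phiStar_cons {X Y : Type*} (φY : Y → L) (z : X ⊕ Y) (v : List (X ⊕ Y)) :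
    phiStar φY (z :: v) = Sum.elim (fun _ => (1 : L)) φY z * phiStar φY v := by
  simp [phiStar]

private lemma phiStar_append {X Y : Type*} (φY : Y → L) (v w : List (X ⊕ Y)) :
    phiStar φY (v ++ w) = phiStar φY v * phiStar φY w := by
  simp [phiStar]

private lemma le_fconcat {X : Type*} (f g : List X → L) (u₁ u₂ : List X) :
    f u₁ * g u₂ ≤ fconcat f g (u₁ ++ u₂) := by
  have hmem : u₁.length ∈ Finset.range ((u₁ ++ u₂).length + 1) := by
    rw [Finset.mem_range, List.length_append]; omega
  have h := Finset.le_sup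
    (f := fun i => f ((u₁ ++ u₂).take i) * g ((u₁ ++ u₂).drop i)) hmem
  simpa only [fconcat, List.take_left, List.drop_left] using h

/-- Lemma A: every matching shuffle-word gives a lower bound of the fuzzy language. -/
private lemma lemA {X Y : Type*} (sc : L → Y) (φY : Y → L)
    {α : FRE X L} {f : List X → L} (hf : IsNorm α f) :
    (∀ l ∈ α.scalars, φY (sc l) = l) →
    ∀ v : List (X ⊕ Y), v ∈ (toReg sc α).matches' →
      phiStar φY v ≤ f (delY v) := by
  induction hf with
  | zero =>
    intro _ v hv
    rw [toReg, RegularExpression.matches'_zero] at hv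
    exact absurd hv (Set.notMem_empty v)
  | eps =>
    intro _ v hv
    rw [toReg, RegularExpression.matches'_epsilon, Language.mem_one] at hv
    subst hv
    simp [phiStar, delY]
  | char x =>
    intro _ v hv
    rw [toReg, RegularExpression.matches'_char] at hv
    replace hv : v = [Sum.inl x] := hv
    subst hv
    simp [phiStar, delY]
  | @smul lam β fb hβ ih =>
    intro hφ v hv
    rw [toReg, RegularExpression.matches'_mul, Language.mem_mul] at hv
    obtain ⟨a, ha, b, hb, rfl⟩ := hv
    rw [RegularExpression.matches'_char] at ha
    replace ha : a = [Sum.inr (sc lam)] := ha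
    subst ha
    have hb' := ih (fun l hl => hφ l (Set.mem_insert_of_mem _ hl)) b hb
    show phiStar φY _ ≤ lam * fb (delY _)
    have hdel : delY ([Sum.inr (sc lam)] ++ b : List (X ⊕ Y)) = delY b := by
      rfl
    rw [hdel, phiStar_append]
    have h1 : phiStar φY ([Sum.inr (sc lam)] : List (X ⊕ Y)) = lam := by
      simp [phiStar, hφ lam (Set.mem_insert _ _)]
    rw [h1]
    exact ilm_mul_le_mul_left lam hb'
  | @plus β γ fb gb hβ hγ ih1 ih2 =>
    intro hφ v hv
    rw [toReg, RegularExpression.matches'_add, Language.mem_add] at hv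
    show phiStar φY v ≤ fb (delY v) ⊔ gb (delY v)
    rcases hv with h | h
    · exact (ih1 (fun l hl => hφ l (Set.mem_union_left _ hl)) v h).trans le_sup_left
    · exact (ih2 (fun l hl => hφ l (Set.mem_union_right _ hl)) v h).trans le_sup_right
  | @comp β γ fb gb hβ hγ ih1 ih2 =>
    intro hφ v hv
    rw [toReg, RegularExpression.matches'_mul, Language.mem_mul] at hv
    obtain ⟨a, ha, b, hb, rfl⟩ := hv
    rw [delY_append, phiStar_append]
    have h1 := ih1 (fun l hl => hφ l (Set.mem_union_left _ hl)) a ha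
    have h2 := ih2 (fun l hl => hφ l (Set.mem_union_right _ hl)) b hb
    exact (ilm_mul_le_mul h1 h2).trans (le_fconcat fb gb (delY a) (delY b))
  | @star β fb g hβ hlub ih =>
    intro hφ v hv
    rw [toReg, RegularExpression.matches'_star, Language.mem_kstar] at hv
    obtain ⟨Lw, rfl, hLw⟩ := hv
    have key : ∀ Lw : List (List (X ⊕ Y)), (∀ y ∈ Lw, y ∈ (toReg sc β).matches') →
        phiStar φY Lw.flatten ≤ fpow fb Lw.length (delY Lw.flatten) := by
      intro Lw
      induction Lw using List.reverseRecOn with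
      | nil => intro _; simp [phiStar, delY, fpow]
      | append_singleton Lw' w ihL =>
        intro hmem
        have h1 := ihL (fun y hy => hmem y (List.mem_append.mpr (Or.inl hy)))
        have h2 := ih hφ w (hmem w (List.mem_append.mpr (Or.inr (List.mem_singleton_self w))))
        have hfl : (Lw' ++ [w]).flatten = Lw'.flatten ++ w := by simp
        have hlen : (Lw' ++ [w]).length = Lw'.length + 1 := by simp
        rw [hfl, hlen, phiStar_append, delY_append]
        exact (ilm_mul_le_mul h1 h2).trans
          (le_fconcat (fpow fb Lw'.length) fb (delY Lw'.flatten) (delY w))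
    exact (key Lw hLw).trans ((hlub (delY Lw.flatten)).1 ⟨Lw.length, rfl⟩)

private lemma sup_repr_concat {X Y : Type*} (φY : Y → L) {f g : List X → L}
    {P Q : Language (X ⊕ Y)}
    (hf : ∀ u, ∃ V : Finset (List (X ⊕ Y)),
      (∀ v ∈ V, delY v = u ∧ v ∈ P) ∧ f u = V.sup (phiStar φY))
    (hg : ∀ u, ∃ V : Finset (List (X ⊕ Y)),
      (∀ v ∈ V, delY v = u ∧ v ∈ Q) ∧ g u = V.sup (phiStar φY)) :
    ∀ u, ∃ V : Finset (List (X ⊕ Y)),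
      (∀ v ∈ V, delY v = u ∧ v ∈ P * Q) ∧ fconcat f g u = V.sup (phiStar φY) := by
  classical
  choose V1 hV1 hfV using hf
  choose V2 hV2 hgV using hg
  intro u
  refine ⟨(Finset.range (u.length + 1)).biUnion
    (fun i => (V1 (u.take i) ×ˢ V2 (u.drop i)).image fun p => p.1 ++ p.2), ?_, ?_⟩
  · intro v hv
    simp only [Finset.mem_biUnion, Finset.mem_image, Finset.mem_product] at hv
    obtain ⟨i, hi, ⟨a, b⟩, ⟨ha, hb⟩, rfl⟩ := hv
    obtain ⟨ha1, ha2⟩ := hV1 _ a ha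
    obtain ⟨hb1, hb2⟩ := hV2 _ b hb
    refine ⟨?_, Language.mem_mul.mpr ⟨a, ha2, b, hb2, rfl⟩⟩
    rw [delY_append, ha1, hb1, List.take_append_drop]
  · have hprod : ∀ A B : Finset (List (X ⊕ Y)),
        A.sup (phiStar φY) * B.sup (phiStar φY)
          = ((A ×ˢ B).image fun p => p.1 ++ p.2).sup (phiStar φY) := by
      intro A B
      rw [Finset.sup_image, Finset.sup_product_left, ilm_sup_mul_finset]
      refine Finset.sup_congr rfl fun a _ => ?_
      rw [ilm_mul_sup_finset]
      exact Finset.sup_congr rfl fun b _ => (phiStar_append φY a b).symm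
    rw [Finset.sup_biUnion]
    show (Finset.range (u.length + 1)).sup (fun i => f (u.take i) * g (u.drop i)) = _
    refine Finset.sup_congr rfl fun i _ => ?_
    rw [hfV, hgV, hprod]

private lemma sup_repr_fpow {X Y : Type*} (φY : Y → L) {f : List X → L}
    {P : Language (X ⊕ Y)}
    (hf : ∀ u, ∃ V : Finset (List (X ⊕ Y)),
      (∀ v ∈ V, delY v = u ∧ v ∈ P) ∧ f u = V.sup (phiStar φY)) :
    ∀ (m : ℕ) (u : List X), ∃ V : Finset (List (X ⊕ Y)),
      (∀ v ∈ V, delY v = u ∧ v ∈ KStar.kstar P) ∧ fpow f m u = V.sup (phiStar φY) := by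
  intro m
  induction m with
  | zero =>
    intro u
    by_cases hu : u = []
    · subst hu
      refine ⟨{[]}, ?_, by simp [fpow, phiStar]⟩
      intro v hv
      rw [Finset.mem_singleton] at hv
      subst hv
      exact ⟨rfl, Language.nil_mem_kstar P⟩
    · exact ⟨∅, by simp, by simp [fpow, hu]⟩
  | succ m ih =>
    intro u
    obtain ⟨V, hV, he⟩ := sup_repr_concat φY ih hf u
    refine ⟨V, fun v hv => ⟨(hV v hv).1, ?_⟩, he⟩
    have hm := (hV v hv).2
    rw [Language.mem_mul] at hm
    obtain ⟨a, ha, b, hb, rfl⟩ := hm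
    rw [Language.mem_kstar] at ha ⊢
    obtain ⟨Lw, rfl, hLw⟩ := ha
    refine ⟨Lw ++ [b], by simp, fun y hy => ?_⟩
    rcases List.mem_append.mp hy with h | h
    · exact hLw y h
    · rw [List.mem_singleton] at h; subst h; exact hb

private lemma fpow_succ_le {X : Type*} (f : List X → L) :
    ∀ (n : ℕ) (u : List X), u.length ≤ n → fpow f (n + 1) u ≤ fpow f n u := by
  intro n
  induction n with
  | zero =>
    intro u hu
    rw [List.eq_nil_of_length_eq_zero (Nat.le_zero.mp hu)]
    have h0 : fpow f 0 ([] : List X) = 1 := by simp [fpow]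
    rw [h0]
    exact ilm_le_one _
  | succ n ih =>
    intro u hu
    show fconcat (fpow f (n + 1)) f u ≤ fpow f (n + 1) u
    refine Finset.sup_le fun i hi => ?_
    rw [Finset.mem_range] at hi
    rcases eq_or_lt_of_le (Nat.lt_succ_iff.mp hi) with he | hlt
    · rw [he, List.take_length, List.drop_length]
      exact ilm_mul_le_left _ _
    · have h1 : (u.take i).length ≤ n := by
        rw [List.length_take]; omega
      have h2 := ih (u.take i) h1
      have h3 : fpow f n (u.take i) * f (u.drop i) ≤ fpow f (n + 1) u := by
        have := le_fconcat (fpow f n) f (u.take i) (u.drop i)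
        rwa [List.take_append_drop] at this
      exact (ilm_mul_le_mul_right _ h2).trans h3

private lemma star_sup_eq {X : Type*} {f g : List X → L}
    (hg : ∀ u, IsLUB {l | ∃ n : ℕ, l = fpow f n u} (g u)) (u : List X) :
    g u = (Finset.range (u.length + 1)).sup fun m => fpow f m u := by
  refine (hg u).unique ⟨?_, ?_⟩
  · rintro l ⟨n, rfl⟩
    induction n with
    | zero =>
      exact Finset.le_sup (f := fun m => fpow f m u)
        (show 0 ∈ Finset.range (u.length + 1) by simp)
    | succ k ihk =>
      by_cases hk : k + 1 ≤ u.length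
      · exact Finset.le_sup (f := fun m => fpow f m u)
          (show k + 1 ∈ Finset.range (u.length + 1) from Finset.mem_range.mpr (by omega))
      · exact (fpow_succ_le f k u (by omega)).trans ihk
  · intro b hb
    exact Finset.sup_le fun m _ => hb ⟨m, rfl⟩

/-- Lemma C: the fuzzy language is a finite join of values of matching shuffle-words. -/
private lemma lemC {X Y : Type*} (sc : L → Y) (φY : Y → L)
    {α : FRE X L} {f : List X → L} (hf : IsNorm α f) :
    (∀ l ∈ α.scalars, φY (sc l) = l) →
    ∀ u : List X, ∃ V : Finset (List (X ⊕ Y)),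
      (∀ v ∈ V, delY v = u ∧ v ∈ (toReg sc α).matches') ∧
      f u = V.sup (phiStar φY) := by
  induction hf with
  | zero =>
    intro _ u
    exact ⟨∅, by simp, by simp⟩
  | eps =>
    intro _ u
    by_cases hu : u = []
    · subst hu
      refine ⟨{[]}, ?_, by simp [phiStar]⟩
      intro v hv
      rw [Finset.mem_singleton] at hv
      subst hv
      refine ⟨rfl, ?_⟩
      rw [toReg, RegularExpression.matches'_epsilon]
      exact (Language.mem_one _).mpr rfl
    · exact ⟨∅, by simp, by simp [hu]⟩
  | char x =>
    intro _ u
    by_cases hu : u = [x]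
    · subst hu
      refine ⟨{[Sum.inl x]}, ?_, by simp [phiStar]⟩
      intro v hv
      rw [Finset.mem_singleton] at hv
      subst hv
      refine ⟨by simp [delY], ?_⟩
      rw [toReg, RegularExpression.matches'_char]
      exact Set.mem_singleton _
    · exact ⟨∅, by simp, by simp [hu]⟩
  | @smul lam β fb hβ ih =>
    intro hφ u
    obtain ⟨V, hV, he⟩ := ih (fun l hl => hφ l (Set.mem_insert_of_mem _ hl)) u
    refine ⟨V.image (fun v => Sum.inr (sc lam) :: v), ?_, ?_⟩
    · intro v hv
      rw [Finset.mem_image] at hv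
      obtain ⟨w, hw, rfl⟩ := hv
      obtain ⟨hw1, hw2⟩ := hV w hw
      have hcons : delY (Sum.inr (sc lam) :: w : List (X ⊕ Y)) = delY w := by
        rfl
      refine ⟨hcons.trans hw1, ?_⟩
      rw [toReg, RegularExpression.matches'_mul]
      refine Language.mem_mul.mpr ⟨[Sum.inr (sc lam)], ?_, w, hw2, rfl⟩
      rw [RegularExpression.matches'_char]
      exact Set.mem_singleton _
    · show lam * fb u = _
      rw [Finset.sup_image, he, ilm_mul_sup_finset]
      refine Finset.sup_congr rfl fun v _ => ?_
      show lam * phiStar φY v = phiStar φY (Sum.inr (sc lam) :: v)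
      rw [phiStar_cons]
      simp [hφ lam (Set.mem_insert _ _)]
  | @plus β γ fb gb hβ hγ ih1 ih2 =>
    intro hφ u
    obtain ⟨V1, hV1, he1⟩ := ih1 (fun l hl => hφ l (Set.mem_union_left _ hl)) u
    obtain ⟨V2, hV2, he2⟩ := ih2 (fun l hl => hφ l (Set.mem_union_right _ hl)) u
    refine ⟨V1 ∪ V2, ?_, ?_⟩
    · intro v hv
      rw [toReg, RegularExpression.matches'_add]
      rcases Finset.mem_union.mp hv with h | h
      · exact ⟨(hV1 v h).1, (Language.mem_add _ _ _).mpr (Or.inl (hV1 v h).2)⟩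
      · exact ⟨(hV2 v h).1, (Language.mem_add _ _ _).mpr (Or.inr (hV2 v h).2)⟩
    · show fb u ⊔ gb u = _
      rw [Finset.sup_union, he1, he2]
  | @comp β γ fb gb hβ hγ ih1 ih2 =>
    intro hφ u
    obtain ⟨V, hV, he⟩ := sup_repr_concat φY
      (ih1 (fun l hl => hφ l (Set.mem_union_left _ hl)))
      (ih2 (fun l hl => hφ l (Set.mem_union_right _ hl))) u
    refine ⟨V, fun v hv => ⟨(hV v hv).1, ?_⟩, he⟩
    rw [toReg, RegularExpression.matches'_mul]
    exact (hV v hv).2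
  | @star β fb g hβ hlub ih =>
    intro hφ u
    classical
    have hrep := sup_repr_fpow φY (ih hφ)
    have hgu := star_sup_eq hlub u
    choose Vm hVm heVm using fun m => hrep m u
    refine ⟨(Finset.range (u.length + 1)).biUnion Vm, ?_, ?_⟩
    · intro v hv
      rw [Finset.mem_biUnion] at hv
      obtain ⟨m, _, hm⟩ := hv
      refine ⟨(hVm m v hm).1, ?_⟩
      rw [toReg, RegularExpression.matches'_star]
      exact (hVm m v hm).2
    · rw [hgu, Finset.sup_biUnion]
      exact Finset.sup_congr rfl fun m _ => heVm m

end Aux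


open Fz in
/-- **Theorem 1 of the paper.** Let `L` be an integral ℓ-monoid, `α` a fuzzy
regular expression over a finite alphabet `X`, and `Y` the alphabet associated with `α`
(a finite alphabet, disjoint from `X`, in bijection `λ ↦ λ' = sc λ` with the set of
scalars occurring in `α`, with `φY` the inverse assignment `λ' ↦ λ`).  Then for every
`u ∈ X*` the set `{φ*_α(v) ⊗ ‖α_R‖(v) : v ∈ U_Y(u)}` has a least upper bound in `L` and
`‖α‖(u) = ⋁_{v ∈ U_Y(u)} φ*_α(v) ⊗ ‖α_R‖(v)`. -/
theorem stmt5 {L X Y : Type*} [IntegralLMonoid L] [Fintype X] [Fintype Y]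
    (α : FRE X L) (sc : L → Y) (φY : Y → L)
    (hsc : Set.BijOn sc α.scalars (Set.univ : Set Y))
    (hφY : ∀ l ∈ α.scalars, φY (sc l) = l)
    (f : List X → L) (hf : IsNorm α f) :
    ∀ u : List X,
      IsLUB {l | ∃ v ∈ UY Y u, l = phiStar φY v * langR sc α v} (f u) := by
  intro u
  constructor
  · rintro l ⟨v, hv, rfl⟩
    have hdel : delY v = u := hv
    by_cases hm : v ∈ (toReg sc α).matches'
    · have h1 := lemA sc φY hf hφY v hm
      rw [hdel] at h1
      rw [langR, if_pos hm, mul_one]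
      exact h1
    · rw [langR, if_neg hm, LMonoid.mul_bot]
      exact bot_le
  · intro b hb
    obtain ⟨V, hV, he⟩ := lemC sc φY hf hφY u
    rw [he]
    refine Finset.sup_le fun v hv => ?_
    obtain ⟨h1, h2⟩ := hV v hv
    have hmem : phiStar φY v * langR sc α v ∈
        {l | ∃ v ∈ UY Y u, l = phiStar φY v * langR sc α v} := ⟨v, h1, rfl⟩
    have hle := hb hmem
    rwa [langR, if_pos h2, mul_one] at hle
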